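/- arXiv:2502.13375 — 2 statements merged into one kernel-verified Lean document; each statement's English description precedes it below -/
import Mathlib

section
/- Let T be the 4-regular torus graph on m² = 2k vertices, namely the box product C_m □ C_m with m ≥ 5, and let c be a coloring with 2 types where each color class has size exactly k. If c is an equilibrium under the difference-seeking utility U_#, then 5·sw(c, U_#) ≥ 24k. -/
open SimpleGraph Finset

/-- The coloring obtained from `c` by swapping the colors (agents) at `u` and `v`. -/
def swapColoring {V : Type*} [DecidableEq V] {t : ℕ} (c : V → Fin t) (u v : V) : V → Fin t :=
  fun w => if w = u then c v else if w = v then c u else c w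

/-- The binary utility `U_b`: 1 if some neighbor has a different type, 0 otherwise. -/
def Ub {V : Type*} [Fintype V] (G : SimpleGraph V) [DecidableRel G.Adj]
    {t : ℕ} (c : V → Fin t) (v : V) : ℕ :=
  if ∃ w ∈ G.neighborFinset v, c w ≠ c v then 1 else 0

/-- The difference-seeking utility `U_#`: the number of neighbors of a different type. -/
def Usharp {V : Type*} [Fintype V] (G : SimpleGraph V) [DecidableRel G.Adj]
    {t : ℕ} (c : V → Fin t) (v : V) : ℕ :=
  ((G.neighborFinset v).filter fun w => c w ≠ c v).card

/-- `T_c(v)`: the set of types present in the neighborhood of `v`. -/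
def typesIn {V : Type*} [Fintype V] (G : SimpleGraph V) [DecidableRel G.Adj]
    {t : ℕ} (c : V → Fin t) (v : V) : Finset (Fin t) :=
  (G.neighborFinset v).image c

/-- The variety-seeking utility `U_τ`: the number of types other than `c v` in the
neighborhood of `v`. -/
def Utau {V : Type*} [Fintype V] (G : SimpleGraph V) [DecidableRel G.Adj]
    {t : ℕ} (c : V → Fin t) (v : V) : ℕ :=
  ((typesIn G c v).erase (c v)).card

/-- The swap of `u` and `v` is improving under utility `U`. -/
def ImprovingSwap {V : Type*} [DecidableEq V] {t : ℕ}
    (U : (V → Fin t) → V → ℕ) (c : V → Fin t) (u v : V) : Prop :=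
  U c u < U (swapColoring c u v) v ∧ U c v < U (swapColoring c u v) u

/-- `c` is an equilibrium under the utility `U`: no improving swap exists. -/
def Equilibrium {V : Type*} [DecidableEq V] {t : ℕ}
    (U : (V → Fin t) → V → ℕ) (c : V → Fin t) : Prop :=
  ∀ u v : V, c u ≠ c v → ¬ ImprovingSwap U c u v

/-- The number of monochromatic edges of `c`. -/
def monoCount {V : Type*} [Fintype V] [DecidableEq V] (G : SimpleGraph V) [DecidableRel G.Adj]
    {t : ℕ} (c : V → Fin t) : ℕ :=
  (G.edgeFinset.filter fun e => (e.map c).IsDiag).card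

/-- The number of colorful edges of `c`. -/
def ceCount {V : Type*} [Fintype V] [DecidableEq V] (G : SimpleGraph V) [DecidableRel G.Adj]
    {t : ℕ} (c : V → Fin t) : ℕ :=
  (G.edgeFinset.filter fun e => ¬ (e.map c).IsDiag).card

/-- The cycle graph on `ZMod n`: `i` adjacent to `i + 1` and `i - 1`. -/
def cycleZMod (n : ℕ) : SimpleGraph (ZMod n) := SimpleGraph.circulantGraph {1}

instance (n : ℕ) : DecidableRel (cycleZMod n).Adj := fun a b =>
  decidable_of_iff (a ≠ b ∧ (a - b = 1 ∨ b - a = 1)) (by simp [cycleZMod])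

instance {α β : Type*} (G : SimpleGraph α) (H : SimpleGraph β)
    [DecidableRel G.Adj] [DecidableRel H.Adj] [DecidableEq α] [DecidableEq β] :
    DecidableRel (G □ H).Adj := fun x y =>
  decidable_of_iff (G.Adj x.1 y.1 ∧ x.2 = y.2 ∨ H.Adj x.2 y.2 ∧ x.1 = y.1)
    (SimpleGraph.boxProd_adj).symm


section AuxLemmas

variable {V : Type*} [Fintype V] [DecidableEq V]

private lemma fin2_ne_iff : ∀ a b x : Fin 2, a ≠ b → (x ≠ a ↔ x = b) := by decide

private lemma fin2_opp : ∀ a b : Fin 2, a ≠ b → a = 0 → b = 1 := by decide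

private lemma fin2_opp' : ∀ a b : Fin 2, a ≠ b → a = 1 → b = 0 := by decide

private lemma fin2_not0 : ∀ a : Fin 2, ¬ a = 0 ↔ a = 1 := by decide

private lemma swapColoring_comm {t : ℕ} (c : V → Fin t) (u v : V) :
    swapColoring c u v = swapColoring c v u := by
  funext w
  simp only [swapColoring]
  by_cases h1 : w = u <;> by_cases h2 : w = v
  · rw [if_pos h1, if_pos h2]
    exact congrArg c (h2.symm.trans h1)
  · rw [if_pos h1, if_neg h2, if_pos h1]
  · rw [if_neg h1, if_pos h2, if_pos h2]
  · rw [if_neg h1, if_neg h2, if_neg h2, if_neg h1]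

private lemma usharp_eq_card_filter (G : SimpleGraph V) [DecidableRel G.Adj]
    (c : V → Fin 2) (u : V) :
    Usharp G c u = (univ.filter fun w => G.Adj u w ∧ c w ≠ c u).card := by
  unfold Usharp
  congr 1
  ext w
  simp [SimpleGraph.mem_neighborFinset]

private lemma usharp_le_degree (G : SimpleGraph V) [DecidableRel G.Adj]
    (c : V → Fin 2) (v : V) : Usharp G c v ≤ G.degree v := by
  unfold Usharp
  rw [← SimpleGraph.card_neighborFinset_eq_degree]
  exact card_filter_le _ _

private lemma sum_usharp (G : SimpleGraph V) [DecidableRel G.Adj] (c : V → Fin 2)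
    (P : V → Prop) [DecidablePred P] :
    ∑ u ∈ univ.filter P, Usharp G c u
      = (((univ.filter P) ×ˢ univ).filter
          fun p : V × V => G.Adj p.1 p.2 ∧ c p.2 ≠ c p.1).card := by
  rw [Finset.card_filter, Finset.sum_product]
  refine Finset.sum_congr rfl fun u _ => ?_
  rw [usharp_eq_card_filter, Finset.card_filter]

private lemma sum_usharp_le (G : SimpleGraph V) [DecidableRel G.Adj] (c : V → Fin 2)
    (P Q : V → Prop) [DecidablePred P] [DecidablePred Q]
    (h : ∀ u v, G.Adj u v → c u ≠ c v → P u → Q v) :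
    ∑ u ∈ univ.filter P, Usharp G c u ≤ ∑ u ∈ univ.filter Q, Usharp G c u := by
  rw [sum_usharp, sum_usharp]
  apply Finset.card_le_card_of_injOn Prod.swap
  · intro p hp
    simp only [Finset.mem_coe, Finset.mem_filter, Finset.mem_product, Finset.mem_univ, true_and,
      and_true] at hp ⊢
    obtain ⟨hP, hadj, hne⟩ := hp
    exact ⟨h p.1 p.2 hadj (Ne.symm hne) hP, hadj.symm, Ne.symm hne⟩
  · intro p _ q _ hpq
    exact Prod.swap_injective hpq

private lemma usharp_swap_nonadj (G : SimpleGraph V) [DecidableRel G.Adj]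
    (c : V → Fin 2) {u v : V} (h : c u ≠ c v) (hna : ¬ G.Adj v u) :
    Usharp G (swapColoring c u v) v = G.degree v - Usharp G c v := by
  have huv : v ≠ u := fun e => h (by rw [e])
  have hcv : swapColoring c u v v = c u := by simp [swapColoring, huv]
  have key : ((G.neighborFinset v).filter fun w => swapColoring c u v w ≠ swapColoring c u v v)
      = (G.neighborFinset v).filter fun w => ¬ c w ≠ c v := by
    apply Finset.filter_congr
    intro w hw
    rw [SimpleGraph.mem_neighborFinset] at hw
    have h1 : w ≠ u := fun e => hna (e ▸ hw)
    have h2 : w ≠ v := fun e => G.irrefl (e ▸ hw)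
    rw [hcv]
    simp only [swapColoring, if_neg h1, if_neg h2, ne_eq, not_not]
    exact fin2_ne_iff _ _ _ h
  have hsum := Finset.card_filter_add_card_filter_not
    (s := G.neighborFinset v) (p := fun w => c w ≠ c v)
  rw [SimpleGraph.card_neighborFinset_eq_degree] at hsum
  unfold Usharp
  rw [key]
  omega

private lemma usharp_swap_adj (G : SimpleGraph V) [DecidableRel G.Adj]
    (c : V → Fin 2) {u v : V} (h : c u ≠ c v) (ha : G.Adj v u) :
    Usharp G (swapColoring c u v) v = (G.degree v - Usharp G c v) + 1 := by
  have huv : v ≠ u := G.ne_of_adj ha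
  have hcv : swapColoring c u v v = c u := by simp [swapColoring, huv]
  have key : ((G.neighborFinset v).filter fun w => swapColoring c u v w ≠ swapColoring c u v v)
      = insert u ((G.neighborFinset v).filter fun w => ¬ c w ≠ c v) := by
    ext w
    simp only [Finset.mem_filter, Finset.mem_insert, SimpleGraph.mem_neighborFinset, hcv]
    constructor
    · rintro ⟨hw, hne⟩
      by_cases h1 : w = u
      · exact Or.inl h1
      · right
        have h2 : w ≠ v := fun e => G.irrefl (e ▸ hw)
        simp only [swapColoring, if_neg h1, if_neg h2] at hne
        exact ⟨hw, not_not_intro ((fin2_ne_iff _ _ _ h).mp hne)⟩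
    · rintro (rfl | ⟨hw, hnn⟩)
      · refine ⟨ha, ?_⟩
        simp only [swapColoring, if_pos rfl]
        exact fun e => h e.symm
      · have hcw : c w = c v := not_not.mp hnn
        have h1 : w ≠ u := fun e => h (by rw [← e, hcw])
        have h2 : w ≠ v := fun e => G.irrefl (e ▸ hw)
        refine ⟨hw, ?_⟩
        simp only [swapColoring, if_neg h1, if_neg h2]
        rw [hcw]
        exact fun e => h e.symm
  have hu_notmem : u ∉ (G.neighborFinset v).filter fun w => ¬ c w ≠ c v := by
    simp [h]
  have hsum := Finset.card_filter_add_card_filter_not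
    (s := G.neighborFinset v) (p := fun w => c w ≠ c v)
  rw [SimpleGraph.card_neighborFinset_eq_degree] at hsum
  have hUd : Usharp G c v ≤ G.degree v := usharp_le_degree G c v
  unfold Usharp
  rw [key, Finset.card_insert_of_notMem hu_notmem]
  unfold Usharp at hUd
  omega

end AuxLemmas

theorem stmt17 (k m : ℕ) (hm : 5 ≤ m) (hn : m * m = 2 * k) [NeZero m]
    (c : ZMod m × ZMod m → Fin 2)
    (hsize : ∀ i : Fin 2,
      ((Finset.univ : Finset (ZMod m × ZMod m)).filter fun v => c v = i).card = k)
    (heq : Equilibrium (Usharp (cycleZMod m □ cycleZMod m)) c) :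
    24 * k ≤ 5 * ∑ v, Usharp (cycleZMod m □ cycleZMod m) c v := by
  -- basic ZMod facts
  have h1 : (1 : ZMod m) ≠ 0 := by
    intro h
    have h' : ((1 : ℕ) : ZMod m) = 0 := by rwa [Nat.cast_one]
    have hdvd : m ∣ 1 := (CharP.cast_eq_zero_iff (ZMod m) m 1).mp h'
    have := Nat.le_of_dvd one_pos hdvd
    omega
  have h2 : (2 : ZMod m) ≠ 0 := by
    intro h
    have h' : ((2 : ℕ) : ZMod m) = 0 := by rwa [Nat.cast_ofNat]
    have hdvd : m ∣ 2 := (CharP.cast_eq_zero_iff (ZMod m) m 2).mp h'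
    have := Nat.le_of_dvd (by norm_num) hdvd
    omega
  -- the cycle C_m is 2-regular
  have hcyc : ∀ a : ZMod m, (cycleZMod m).degree a = 2 := by
    intro a
    have hnb : (cycleZMod m).neighborFinset a = {a + 1, a - 1} := by
      ext b
      rw [SimpleGraph.mem_neighborFinset]
      simp only [cycleZMod, SimpleGraph.circulantGraph_adj, Set.mem_singleton_iff,
        Finset.mem_insert, Finset.mem_singleton]
      constructor
      · rintro ⟨hne, h | h⟩
        · right; rw [← h]; ring
        · left; rw [← h]; ring
      · rintro (rfl | rfl)
        · refine ⟨fun e => h1 ?_, Or.inr (by ring)⟩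
          have he : (1 : ZMod m) = a + 1 - a := by ring
          rw [he, ← e, sub_self]
        · refine ⟨fun e => h1 ?_, Or.inl (by ring)⟩
          have he : (1 : ZMod m) = a - (a - 1) := by ring
          rw [he, ← e, sub_self]
    rw [← SimpleGraph.card_neighborFinset_eq_degree, hnb]
    rw [Finset.card_insert_of_notMem, Finset.card_singleton]
    simp only [Finset.mem_singleton]
    intro e
    apply h2
    have he : (2 : ZMod m) = (a + 1) - (a - 1) := by ring
    rw [he, e, sub_self]
  -- the torus is 4-regular (with the canonical Fintype instance on neighbor sets)
  have hdeg : ∀ v : ZMod m × ZMod m,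
      @SimpleGraph.degree _ (cycleZMod m □ cycleZMod m) v
        (SimpleGraph.neighborSetFintype _ v) = 4 := by
    intro v
    exact (@SimpleGraph.degree_boxProd _ _ (cycleZMod m) (cycleZMod m) v _ _
      (SimpleGraph.neighborSetFintype _ v)).trans (by rw [hcyc v.1, hcyc v.2])
  have hUle : ∀ v, Usharp (cycleZMod m □ cycleZMod m) c v ≤ 4 :=
    fun v => (usharp_le_degree _ c v).trans_eq (hdeg v)
  -- equilibrium consequences
  have hadj5 : ∀ u v, (cycleZMod m □ cycleZMod m).Adj u v → c u ≠ c v →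
      5 ≤ Usharp (cycleZMod m □ cycleZMod m) c u + Usharp (cycleZMod m □ cycleZMod m) c v := by
    intro u v ha hne
    by_contra hlt
    push_neg at hlt
    refine heq u v hne ⟨?_, ?_⟩
    · rw [usharp_swap_adj _ c hne ha.symm, hdeg]
      have := hUle u
      have := hUle v
      omega
    · rw [swapColoring_comm, usharp_swap_adj _ c (Ne.symm hne) ha, hdeg]
      have := hUle u
      have := hUle v
      omega
  have hnadj4 : ∀ u v, ¬ (cycleZMod m □ cycleZMod m).Adj u v → c u ≠ c v →
      4 ≤ Usharp (cycleZMod m □ cycleZMod m) c u + Usharp (cycleZMod m □ cycleZMod m) c v := by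
    intro u v ha hne
    by_contra hlt
    push_neg at hlt
    refine heq u v hne ⟨?_, ?_⟩
    · rw [usharp_swap_nonadj _ c hne (fun h => ha h.symm), hdeg]
      have := hUle u
      have := hUle v
      omega
    · rw [swapColoring_comm, usharp_swap_nonadj _ c (Ne.symm hne) ha, hdeg]
      have := hUle u
      have := hUle v
      omega
  -- the two color classes have equal bichromatic degree sums
  have hsym : ∑ u ∈ Finset.univ.filter (fun v => c v = 0),
        Usharp (cycleZMod m □ cycleZMod m) c u
      = ∑ u ∈ Finset.univ.filter (fun v => c v = 1),
        Usharp (cycleZMod m □ cycleZMod m) c u := by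
    apply le_antisymm
    · exact sum_usharp_le _ c _ _ (fun u v _ hne hu => fin2_opp _ _ hne hu)
    · exact sum_usharp_le _ c _ _ (fun u v _ hne hu => fin2_opp' _ _ hne hu)
  have hsplit : ∑ v, Usharp (cycleZMod m □ cycleZMod m) c v
      = ∑ u ∈ Finset.univ.filter (fun v => c v = 0),
          Usharp (cycleZMod m □ cycleZMod m) c u
      + ∑ u ∈ Finset.univ.filter (fun v => c v = 1),
          Usharp (cycleZMod m □ cycleZMod m) c u := by
    rw [← Finset.sum_filter_add_sum_filter_not Finset.univ (fun v => c v = 0)]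
    congr 1
    refine Finset.sum_congr ?_ (fun _ _ => rfl)
    exact Finset.filter_congr (fun v _ => fin2_not0 (c v))
  by_cases hex : ∃ u, Usharp (cycleZMod m □ cycleZMod m) c u ≤ 1
  · -- some vertex has utility ≤ 1: the whole opposite class has utility ≥ 3
    obtain ⟨u, hu⟩ := hex
    have hall : ∀ v, c v ≠ c u → 3 ≤ Usharp (cycleZMod m □ cycleZMod m) c v := by
      intro v hv
      by_cases ha : (cycleZMod m □ cycleZMod m).Adj u v
      · have := hadj5 u v ha (Ne.symm hv); omega
      · have := hnadj4 u v ha (Ne.symm hv); omega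
    have hone : ∀ j : Fin 2, c u ≠ j →
        3 * k ≤ ∑ v ∈ Finset.univ.filter (fun v => c v = j),
          Usharp (cycleZMod m □ cycleZMod m) c v := by
      intro j hj
      have hle := Finset.card_nsmul_le_sum
        (Finset.univ.filter (fun v => c v = j)) (Usharp (cycleZMod m □ cycleZMod m) c) 3
        (fun v hv => by
          rw [Finset.mem_filter] at hv
          exact hall v (by rw [hv.2]; exact Ne.symm hj))
      rw [hsize j, smul_eq_mul] at hle
      exact le_trans (le_of_eq (Nat.mul_comm 3 k)) hle
    have h3 : 3 * k ≤ ∑ u ∈ Finset.univ.filter (fun v => c v = 1),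
        Usharp (cycleZMod m □ cycleZMod m) c u := by
      by_cases h0 : c u = 0
      · exact hone 1 (by rw [h0]; decide)
      · rw [← hsym]
        exact hone 0 h0
    omega
  · -- all utilities are at least 2
    push_neg at hex
    have hmin : ∀ v, 2 ≤ Usharp (cycleZMod m □ cycleZMod m) c v := fun v => hex v
    have hfe : Finset.univ.filter
          (fun v : ZMod m × ZMod m => ¬ Usharp (cycleZMod m □ cycleZMod m) c v = 2)
        = Finset.univ.filter (fun v => 3 ≤ Usharp (cycleZMod m □ cycleZMod m) c v) := by
      refine Finset.filter_congr (fun v _ => ?_)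
      have := hmin v
      omega
    have hsplit2 : ∑ v, Usharp (cycleZMod m □ cycleZMod m) c v
        = ∑ u ∈ Finset.univ.filter (fun v => Usharp (cycleZMod m □ cycleZMod m) c v = 2),
            Usharp (cycleZMod m □ cycleZMod m) c u
        + ∑ u ∈ Finset.univ.filter (fun v => 3 ≤ Usharp (cycleZMod m □ cycleZMod m) c v),
            Usharp (cycleZMod m □ cycleZMod m) c u := by
      rw [← Finset.sum_filter_add_sum_filter_not Finset.univ
        (fun v => Usharp (cycleZMod m □ cycleZMod m) c v = 2), hfe]
    have hc : (Finset.univ : Finset (ZMod m × ZMod m)).card = 2 * k := by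
      rw [Finset.card_univ, Fintype.card_prod, ZMod.card, hn]
    have hcards : (Finset.univ.filter
          (fun v : ZMod m × ZMod m => Usharp (cycleZMod m □ cycleZMod m) c v = 2)).card
        + (Finset.univ.filter
          (fun v => 3 ≤ Usharp (cycleZMod m □ cycleZMod m) c v)).card = 2 * k := by
      have hfc := Finset.card_filter_add_card_filter_not
        (s := (Finset.univ : Finset (ZMod m × ZMod m)))
        (p := fun v => Usharp (cycleZMod m □ cycleZMod m) c v = 2)
      rw [hfe, hc] at hfc
      exact hfc
    have hB : ∑ u ∈ Finset.univ.filter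
          (fun v => Usharp (cycleZMod m □ cycleZMod m) c v = 2),
          Usharp (cycleZMod m □ cycleZMod m) c u
        = 2 * (Finset.univ.filter
          (fun v : ZMod m × ZMod m => Usharp (cycleZMod m □ cycleZMod m) c v = 2)).card := by
      rw [Finset.sum_congr rfl
        (fun v hv => ((Finset.mem_filter.mp hv).2 :
          Usharp (cycleZMod m □ cycleZMod m) c v = 2)),
        Finset.sum_const, smul_eq_mul, mul_comm]
    have hS : 3 * (Finset.univ.filter
          (fun v : ZMod m × ZMod m => 3 ≤ Usharp (cycleZMod m □ cycleZMod m) c v)).card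
        ≤ ∑ u ∈ Finset.univ.filter (fun v => 3 ≤ Usharp (cycleZMod m □ cycleZMod m) c v),
            Usharp (cycleZMod m □ cycleZMod m) c u := by
      have hle := Finset.card_nsmul_le_sum
        (Finset.univ.filter (fun v : ZMod m × ZMod m =>
          3 ≤ Usharp (cycleZMod m □ cycleZMod m) c v))
        (Usharp (cycleZMod m □ cycleZMod m) c) 3
        (fun v hv => (Finset.mem_filter.mp hv).2)
      rw [smul_eq_mul] at hle
      exact le_trans (le_of_eq (Nat.mul_comm 3 _)) hle
    have hkey : ∑ u ∈ Finset.univ.filter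
          (fun v => Usharp (cycleZMod m □ cycleZMod m) c v = 2),
          Usharp (cycleZMod m □ cycleZMod m) c u
        ≤ ∑ u ∈ Finset.univ.filter (fun v => 3 ≤ Usharp (cycleZMod m □ cycleZMod m) c v),
            Usharp (cycleZMod m □ cycleZMod m) c u := by
      refine sum_usharp_le _ c _ _ (fun u v ha hne hu => ?_)
      have := hadj5 u v ha hne
      omega
    omega
end

section
/- Let t ≥ 3, let T be the 4-regular torus graph on m² = tk vertices, namely the box product C_m □ C_m with m ≥ 5, and let c be a coloring with t types where each color class has size exactly k. If c is an equilibrium under the difference-seeking utility U_#, then sw(c, U_#) ≥ (4t − 13)k and sw(c, U_#) ≥ (3t − 3)k. -/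
open SimpleGraph Finset

/-! ### Auxiliary lemmas -/

/-- Double-counting bound for "tournament-like" structures: if for every pair of distinct
elements of `R` at least one of them is in the out-set of the other, and every out-set has
size at most `d`, then `R` has at most `2d+1` elements. -/
lemma tourney {α : Type*} [DecidableEq α] (R : Finset α) (f : α → Finset α) (d : ℕ)
    (hd : ∀ j ∈ R, (f j).card ≤ d)
    (hpair : ∀ i ∈ R, ∀ j ∈ R, i ≠ j → i ∈ f j ∨ j ∈ f i) :
    R.card ≤ 2 * d + 1 := by
  rcases Nat.eq_zero_or_pos R.card with h0 | hpos
  · omega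
  set A : Finset (α × α) := (R ×ˢ R).filter (fun p => p.1 ≠ p.2 ∧ p.1 ∈ f p.2) with hA
  have hAcard : A.card ≤ R.card * d := by
    have hsub : A ⊆ R.biUnion (fun j => (f j).image (fun i => (i, j))) := by
      intro p hp
      simp only [hA, mem_filter, mem_product] at hp
      refine mem_biUnion.2 ⟨p.2, hp.1.2, ?_⟩
      exact mem_image.2 ⟨p.1, hp.2.2, by simp⟩
    calc A.card ≤ _ := card_le_card hsub
      _ ≤ ∑ j ∈ R, ((f j).image (fun i => (i, j))).card := card_biUnion_le
      _ ≤ ∑ _j ∈ R, d := by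
          exact sum_le_sum fun j hj => le_trans card_image_le (hd j hj)
      _ = R.card * d := by rw [sum_const, smul_eq_mul]
  have hoff : R.offDiag ⊆ A ∪ A.image Prod.swap := by
    intro p hp
    rw [mem_offDiag] at hp
    obtain ⟨h1, h2, h3⟩ := hp
    rcases hpair p.1 h1 p.2 h2 h3 with h | h
    · exact mem_union_left _ (mem_filter.2 ⟨mem_product.2 ⟨h1, h2⟩, h3, h⟩)
    · refine mem_union_right _ (mem_image.2 ⟨(p.2, p.1), ?_, rfl⟩)
      exact mem_filter.2 ⟨mem_product.2 ⟨h2, h1⟩, h3.symm, h⟩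
  have hcard := card_le_card hoff
  rw [offDiag_card] at hcard
  have hud : (A ∪ A.image Prod.swap).card ≤ A.card + A.card := by
    have h1 := card_union_le A (A.image Prod.swap)
    have h2 : (A.image Prod.swap).card ≤ A.card := card_image_le
    omega
  have hq : R.card * R.card - R.card ≤ 2 * (R.card * d) := by
    have := le_trans hcard hud
    omega
  have hfin : R.card * R.card ≤ 2 * (R.card * d) + R.card :=
    Nat.sub_le_iff_le_add.mp hq
  by_contra hcon
  push_neg at hcon
  nlinarith

/-- Three disjoint color-fibers of a finite set have total size at most the size of the set. -/
lemma filter_three {α β : Type*} [DecidableEq α] [DecidableEq β] (N : Finset α) (c : α → β)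
    (x y z : β) (hxy : x ≠ y) (hxz : x ≠ z) (hyz : y ≠ z) :
    (N.filter (fun w => c w = x)).card + (N.filter (fun w => c w = y)).card
      + (N.filter (fun w => c w = z)).card ≤ N.card := by
  have d1 : Disjoint (N.filter (fun w => c w = x)) (N.filter (fun w => c w = y)) := by
    rw [Finset.disjoint_left]
    intro w hw1 hw2
    exact hxy ((mem_filter.1 hw1).2 ▸ (mem_filter.1 hw2).2 ▸ rfl)
  have d2 : Disjoint (N.filter (fun w => c w = x) ∪ N.filter (fun w => c w = y))
      (N.filter (fun w => c w = z)) := by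
    rw [Finset.disjoint_left]
    intro w hw1 hw2
    rcases mem_union.1 hw1 with h | h
    · exact hxz ((mem_filter.1 h).2 ▸ (mem_filter.1 hw2).2 ▸ rfl)
    · exact hyz ((mem_filter.1 h).2 ▸ (mem_filter.1 hw2).2 ▸ rfl)
  calc (N.filter (fun w => c w = x)).card + (N.filter (fun w => c w = y)).card
      + (N.filter (fun w => c w = z)).card
      = ((N.filter (fun w => c w = x) ∪ N.filter (fun w => c w = y))
          ∪ N.filter (fun w => c w = z)).card := by
        rw [card_union_of_disjoint d2, card_union_of_disjoint d1]
    _ ≤ N.card := card_le_card (by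
        refine union_subset (union_subset ?_ ?_) ?_ <;> exact filter_subset _ _)

/-- Two disjoint color-fibers. -/
lemma filter_two {α β : Type*} [DecidableEq α] [DecidableEq β] (N : Finset α) (c : α → β)
    (x y : β) (hxy : x ≠ y) :
    (N.filter (fun w => c w = x)).card + (N.filter (fun w => c w = y)).card ≤ N.card := by
  have d1 : Disjoint (N.filter (fun w => c w = x)) (N.filter (fun w => c w = y)) := by
    rw [Finset.disjoint_left]
    intro w hw1 hw2
    exact hxy ((mem_filter.1 hw1).2 ▸ (mem_filter.1 hw2).2 ▸ rfl)
  calc (N.filter (fun w => c w = x)).card + (N.filter (fun w => c w = y)).card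
      = (N.filter (fun w => c w = x) ∪ N.filter (fun w => c w = y)).card :=
        (card_union_of_disjoint d1).symm
    _ ≤ N.card := card_le_card (union_subset (filter_subset _ _) (filter_subset _ _))

/-- The main combinatorial bound, for an arbitrary 4-regular graph. -/
lemma main_bound {V : Type*} [Fintype V] [DecidableEq V] (G : SimpleGraph V)
    [DecidableRel G.Adj] {t k : ℕ} (ht : 3 ≤ t) (hk : 1 ≤ k) (c : V → Fin t)
    (hdeg : ∀ v, G.degree v = 4)
    (hsize : ∀ i : Fin t, ((Finset.univ : Finset V).filter fun v => c v = i).card = k)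
    (heq : Equilibrium (Usharp G) c) :
    ∃ X : ℕ, (∑ v, Usharp G c v) + X = 4 * (t * k) ∧ X ≤ (t + 3) * k ∧ X ≤ 10 * k := by
  classical
  -- `s v x` = number of neighbours of `v` of color `x`
  set s : V → Fin t → ℕ := fun v x => ((G.neighborFinset v).filter fun w => c w = x).card
    with hs
  have hcardN : ∀ v, (G.neighborFinset v).card = 4 := fun v => hdeg v
  have h1 : ∀ v (x : Fin t),
      ((G.neighborFinset v).filter fun w => c w ≠ x).card + s v x = 4 := by
    intro v x
    have h := Finset.card_filter_add_card_filter_not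
      (s := G.neighborFinset v) (p := fun w => c w = x)
    rw [hcardN v] at h
    have hrw : (G.neighborFinset v).filter (fun w => ¬ c w = x)
        = (G.neighborFinset v).filter (fun w => c w ≠ x) := by
      apply filter_congr; intro w _; rfl
    rw [hrw] at h
    simp only [hs]
    omega
  have hUs : ∀ v, Usharp G c v = ((G.neighborFinset v).filter fun w => c w ≠ c v).card :=
    fun v => rfl
  have hs4 : ∀ v x, s v x ≤ 4 := by
    intro v x
    have := card_filter_le (G.neighborFinset v) (fun w => c w = x)
    rw [hcardN v] at this
    exact this
  -- The key consequence of equilibrium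
  have hstar : ∀ u v, c u ≠ c v → s u (c u) ≤ s v (c u) ∨ s v (c v) ≤ s u (c v) := by
    intro u v hne
    by_contra hcon
    push_neg at hcon
    obtain ⟨hA, hB⟩ := hcon
    have huv : u ≠ v := fun h => hne (h ▸ rfl)
    apply heq u v hne
    have hcv : swapColoring c u v v = c u := by
      simp [swapColoring, huv.symm]
    have hcu : swapColoring c u v u = c v := by
      simp [swapColoring]
    constructor
    · -- `Usharp c u < Usharp c' v`
      have hsub : (G.neighborFinset v).filter (fun w => c w ≠ c u)
          ⊆ (G.neighborFinset v).filter
            (fun w => swapColoring c u v w ≠ swapColoring c u v v) := by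
        intro w hw
        rw [mem_filter] at hw ⊢
        refine ⟨hw.1, ?_⟩
        have hwu : w ≠ u := fun h => hw.2 (h ▸ rfl)
        have hwv : w ≠ v := by
          rintro rfl
          have hadj := hw.1
          rw [mem_neighborFinset] at hadj
          exact G.irrefl hadj
        rw [hcv]
        simpa [swapColoring, hwu, hwv] using hw.2
      have hle : ((G.neighborFinset v).filter fun w => c w ≠ c u).card
          ≤ Usharp G (swapColoring c u v) v := by
        rw [Usharp]
        exact card_le_card hsub
      have e1 := h1 u (c u)
      have e2 := h1 v (c u)
      rw [hUs u]
      omega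
    · -- `Usharp c v < Usharp c' u`
      have hsub : (G.neighborFinset u).filter (fun w => c w ≠ c v)
          ⊆ (G.neighborFinset u).filter
            (fun w => swapColoring c u v w ≠ swapColoring c u v u) := by
        intro w hw
        rw [mem_filter] at hw ⊢
        refine ⟨hw.1, ?_⟩
        have hwv : w ≠ v := fun h => hw.2 (h ▸ rfl)
        have hwu : w ≠ u := by
          rintro rfl
          have hadj := hw.1
          rw [mem_neighborFinset] at hadj
          exact G.irrefl hadj
        rw [hcu]
        simpa [swapColoring, hwu, hwv] using hw.2
      have hle : ((G.neighborFinset u).filter fun w => c w ≠ c v).card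
          ≤ Usharp G (swapColoring c u v) u := by
        rw [Usharp]
        exact card_le_card hsub
      have e1 := h1 v (c v)
      have e2 := h1 u (c v)
      rw [hUs v]
      omega
  -- choose, for each color, a vertex of that color maximizing `s · j`
  have hne_class : ∀ j : Fin t, ((Finset.univ : Finset V).filter fun v => c v = j).Nonempty := by
    intro j
    rw [← card_pos, hsize j]
    omega
  have hwex : ∀ j : Fin t, ∃ v, c v = j ∧ ∀ u, c u = j → s u j ≤ s v j := by
    intro j
    obtain ⟨v, hv, hmax⟩ := Finset.exists_max_image _ (fun v => s v j) (hne_class j)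
    exact ⟨v, (mem_filter.1 hv).2, fun u hu => hmax u (mem_filter.2 ⟨mem_univ _, hu⟩)⟩
  choose w hw1 hw2 using hwex
  set a : Fin t → ℕ := fun j => s (w j) j with ha
  have ha4 : ∀ j, a j ≤ 4 := fun j => hs4 _ _
  set R : Finset (Fin t) := Finset.univ.filter (fun j => 1 ≤ a j) with hR
  set P : Finset (Fin t) := Finset.univ.filter (fun j => 2 ≤ a j) with hP
  have hPR : P ⊆ R := by
    intro j hj
    rw [hP, mem_filter] at hj
    rw [hR, mem_filter]
    exact ⟨mem_univ _, by omega⟩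
  -- R has at most 7 elements
  have hR7 : R.card ≤ 7 := by
    have := tourney R
      (fun j => ((G.neighborFinset (w j)).filter (fun x => c x ≠ j)).image c) 3
      (by
        intro j hj
        rw [hR, mem_filter] at hj
        refine le_trans card_image_le ?_
        have h1j := h1 (w j) j
        have haj : 1 ≤ a j := hj.2
        simp only [ha, hs] at haj h1j
        omega)
      (by
        intro i hi j hj hij
        rw [hR, mem_filter] at hi hj
        have hcij : c (w i) ≠ c (w j) := by simp only [hw1]; exact hij
        rcases hstar (w i) (w j) hcij with h | h
        · left
          simp only [hw1] at h
          have hpos : 0 < s (w j) i := lt_of_lt_of_le hi.2 h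
          rw [hs] at hpos
          obtain ⟨x, hx⟩ := card_pos.1 hpos
          rw [mem_filter] at hx
          exact mem_image.2 ⟨x, mem_filter.2 ⟨hx.1, hx.2 ▸ hij⟩, hx.2⟩
        · right
          simp only [hw1] at h
          have hpos : 0 < s (w i) j := lt_of_lt_of_le hj.2 h
          rw [hs] at hpos
          obtain ⟨x, hx⟩ := card_pos.1 hpos
          rw [mem_filter] at hx
          exact mem_image.2 ⟨x, mem_filter.2 ⟨hx.1, hx.2 ▸ hij.symm⟩, hx.2⟩)
    omega
  -- P has at most 3 elements
  have hP3 : P.card ≤ 3 := by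
    have := tourney P
      (fun j => Finset.univ.filter (fun i : Fin t => i ≠ j ∧ 2 ≤ s (w j) i)) 1
      (by
        intro j hj
        rw [hP, mem_filter] at hj
        by_contra hcon
        push_neg at hcon
        obtain ⟨i1, hi1, i2, hi2, h12⟩ := Finset.one_lt_card.1 hcon
        rw [mem_filter] at hi1 hi2
        have htri := filter_three (G.neighborFinset (w j)) c i1 i2 j h12
          hi1.2.1 hi2.2.1
        rw [hcardN (w j)] at htri
        have hb1 : 2 ≤ s (w j) i1 := hi1.2.2
        have hb2 : 2 ≤ s (w j) i2 := hi2.2.2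
        have hb3 : 2 ≤ s (w j) j := hj.2
        simp only [hs] at hb1 hb2 hb3
        omega)
      (by
        intro i hi j hj hij
        rw [hP, mem_filter] at hi hj
        have hcij : c (w i) ≠ c (w j) := by simp only [hw1]; exact hij
        rcases hstar (w i) (w j) hcij with h | h
        · left
          simp only [hw1] at h
          exact mem_filter.2 ⟨mem_univ _, hij, le_trans hi.2 h⟩
        · right
          simp only [hw1] at h
          exact mem_filter.2 ⟨mem_univ _, hij.symm, le_trans hj.2 h⟩)
    omega
  -- if P has at least two elements, every element of P has a-value exactly 2
  have hPa : 2 ≤ P.card → ∀ j ∈ P, a j ≤ 2 := by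
    intro hp2 j hj
    obtain ⟨i, hi, hijne⟩ := Finset.exists_mem_ne hp2 j
    rw [hP, mem_filter] at hi hj
    have hcij : c (w i) ≠ c (w j) := by simp only [hw1]; exact hijne
    rcases hstar (w i) (w j) hcij with h | h
    · simp only [hw1] at h
      have hft := filter_two (G.neighborFinset (w j)) c i j hijne
      rw [hcardN (w j)] at hft
      have h2i : 2 ≤ a i := hi.2
      simp only [ha, hs] at h2i ⊢
      simp only [hs] at h hft
      omega
    · simp only [hw1] at h
      have hft := filter_two (G.neighborFinset (w i)) c j i hijne.symm
      rw [hcardN (w i)] at hft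
      have h2i : 2 ≤ a i := hi.2
      simp only [ha, hs] at h2i ⊢
      simp only [hs] at h hft
      omega
  -- sum of a over R is at most |R| + 3
  have hsumP : ∑ j ∈ P, (a j - 1) ≤ 3 := by
    rcases le_or_gt P.card 1 with h | h
    · calc ∑ j ∈ P, (a j - 1) ≤ ∑ _j ∈ P, 3 :=
            sum_le_sum (fun j _ => by have := ha4 j; omega)
        _ = P.card * 3 := by rw [sum_const, smul_eq_mul]
        _ ≤ 3 := by omega
    · calc ∑ j ∈ P, (a j - 1) ≤ ∑ _j ∈ P, 1 :=
            sum_le_sum (fun j hj => by have := hPa h j hj; omega)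
        _ = P.card := by rw [sum_const, smul_eq_mul, mul_one]
        _ ≤ 3 := hP3
  have hsumR : ∑ j ∈ R, a j ≤ R.card + 3 := by
    have hsplit : ∑ j ∈ R, a j = R.card + ∑ j ∈ R, (a j - 1) := by
      rw [card_eq_sum_ones, ← sum_add_distrib]
      apply sum_congr rfl
      intro j hj
      rw [hR, mem_filter] at hj
      omega
    have hRP : ∑ j ∈ R, (a j - 1) = ∑ j ∈ P, (a j - 1) := by
      rw [← sum_filter_add_sum_filter_not R (fun j => 2 ≤ a j) (fun j => a j - 1)]
      have hfeq : R.filter (fun j => 2 ≤ a j) = P := by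
        rw [hR, hP, filter_filter]
        apply filter_congr
        intro j _
        constructor
        · rintro ⟨_, h⟩; exact h
        · intro h; exact ⟨by omega, h⟩
      have hzero : ∑ j ∈ R.filter (fun j => ¬ 2 ≤ a j), (a j - 1) = 0 := by
        apply sum_eq_zero
        intro j hj
        rw [mem_filter] at hj
        omega
      rw [hfeq, hzero, add_zero]
    omega
  have hsuma : ∑ j : Fin t, a j ≤ R.card + 3 := by
    have hsplit := sum_filter_add_sum_filter_not (Finset.univ : Finset (Fin t))
      (fun j => 1 ≤ a j) a
    rw [← hR] at hsplit
    have hzero : ∑ j ∈ Finset.univ.filter (fun j => ¬ 1 ≤ a j), a j = 0 := by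
      apply sum_eq_zero
      intro j hj
      rw [mem_filter] at hj
      omega
    omega
  have hRt : R.card ≤ t := le_trans (card_filter_le _ _) (by simp)
  -- the total same-color count
  refine ⟨∑ v, s v (c v), ?_, ?_, ?_⟩
  · -- ∑ Usharp + ∑ s = 4 * (t * k)
    have hterm : ∀ v : V, Usharp G c v + s v (c v) = 4 := by
      intro v
      have := h1 v (c v)
      rw [hUs v]
      omega
    have hcardV : (Finset.univ : Finset V).card = t * k := by
      rw [card_eq_sum_card_fiberwise (f := c) (t := Finset.univ)
        (fun v _ => mem_univ _)]
      rw [sum_congr rfl (fun j _ => hsize j), sum_const, smul_eq_mul, card_univ,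
        Fintype.card_fin]
    calc (∑ v, Usharp G c v) + ∑ v, s v (c v) = ∑ v : V, (Usharp G c v + s v (c v)) :=
          (sum_add_distrib).symm
      _ = ∑ _v : V, 4 := sum_congr rfl (fun v _ => hterm v)
      _ = (Finset.univ : Finset V).card * 4 := by rw [sum_const, smul_eq_mul]
      _ = 4 * (t * k) := by rw [hcardV]; ring
  all_goals {
    have hXb : ∑ v, s v (c v) ≤ k * (R.card + 3) := by
      have hfib : ∑ j : Fin t, ∑ v ∈ Finset.univ.filter (fun v => c v = j), s v (c v)
          = ∑ v, s v (c v) := Finset.sum_fiberwise _ _ _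
      have hinner : ∀ j : Fin t,
          ∑ v ∈ Finset.univ.filter (fun v => c v = j), s v (c v) ≤ k * a j := by
        intro j
        calc ∑ v ∈ Finset.univ.filter (fun v => c v = j), s v (c v)
            ≤ ∑ _v ∈ Finset.univ.filter (fun v => c v = j), a j := by
              apply sum_le_sum
              intro v hv
              rw [mem_filter] at hv
              rw [hv.2]
              exact hw2 j v hv.2
          _ = k * a j := by rw [sum_const, smul_eq_mul, hsize j]
      calc ∑ v, s v (c v) = ∑ j : Fin t, ∑ v ∈ Finset.univ.filter (fun v => c v = j),
            s v (c v) := hfib.symm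
        _ ≤ ∑ j : Fin t, k * a j := sum_le_sum (fun j _ => hinner j)
        _ = k * ∑ j : Fin t, a j := by rw [mul_sum]
        _ ≤ k * (R.card + 3) := Nat.mul_le_mul_left k hsuma
    refine le_trans hXb ?_
    rw [mul_comm k]
    exact Nat.mul_le_mul (by omega) (le_refl k) }

/-- The degree does not depend on the `Fintype` instance on the neighbor set. -/
lemma degree_instance_irrel {V : Type*} (G : SimpleGraph V) (v : V)
    (i1 i2 : Fintype (G.neighborSet v)) :
    @SimpleGraph.degree V G v i1 = @SimpleGraph.degree V G v i2 := by
  rw [Subsingleton.elim i1 i2]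

/-- The cycle graph on `ZMod m` is 2-regular for `m ≥ 5`. -/
lemma cycle_degree (m : ℕ) (hm : 5 ≤ m) [NeZero m] (x : ZMod m) :
    (cycleZMod m).degree x = 2 := by
  classical
  have hdvd : ∀ a : ℕ, 0 < a → a < m → ((a : ZMod m) ≠ 0) := by
    intro a ha ham h
    rw [ZMod.natCast_eq_zero_iff] at h
    have := Nat.le_of_dvd ha h
    omega
  have h1 : (1 : ZMod m) ≠ 0 := by
    have := hdvd 1 (by omega) (by omega)
    simpa using this
  have h2 : (2 : ZMod m) ≠ 0 := by
    have := hdvd 2 (by omega) (by omega)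
    simpa using this
  have hNF : (cycleZMod m).neighborFinset x = {x - 1, x + 1} := by
    ext y
    rw [mem_neighborFinset]
    simp only [cycleZMod, circulantGraph_adj, Set.mem_singleton_iff, mem_insert, mem_singleton]
    constructor
    · rintro ⟨hne, h | h⟩
      · left
        have : y = x - 1 := by linear_combination -h
        exact this
      · right
        have : y = x + 1 := by linear_combination h
        exact this
    · rintro (rfl | rfl)
      · refine ⟨?_, Or.inl (by ring)⟩
        intro h
        apply h1
        linear_combination h
      · refine ⟨?_, Or.inr (by ring)⟩
        intro h
        apply h1
        linear_combination -h
  have hcard : ({x - 1, x + 1} : Finset (ZMod m)).card = 2 := by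
    rw [card_insert_of_notMem, card_singleton]
    rw [mem_singleton]
    intro h
    exact h2 (by linear_combination -h)
  rw [show (cycleZMod m).degree x = ((cycleZMod m).neighborFinset x).card from rfl, hNF, hcard]

theorem stmt18 (t k m : ℕ) (ht : 3 ≤ t) (hm : 5 ≤ m) (hn : m * m = t * k) [NeZero m]
    (c : ZMod m × ZMod m → Fin t)
    (hsize : ∀ i : Fin t,
      ((Finset.univ : Finset (ZMod m × ZMod m)).filter fun v => c v = i).card = k)
    (heq : Equilibrium (Usharp (cycleZMod m □ cycleZMod m)) c) :
    (4 * (t : ℤ) - 13) * (k : ℤ) ≤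
        (↑(∑ v, Usharp (cycleZMod m □ cycleZMod m) c v) : ℤ) ∧
      (3 * (t : ℤ) - 3) * (k : ℤ) ≤
        (↑(∑ v, Usharp (cycleZMod m □ cycleZMod m) c v) : ℤ) := by
  classical
  have hmm : 0 < t * k := by
    rw [← hn]
    exact Nat.mul_pos (by omega) (by omega)
  have hk : 1 ≤ k := by
    rcases Nat.eq_zero_or_pos k with rfl | h
    · rw [Nat.mul_zero] at hmm
      exact absurd hmm (lt_irrefl 0)
    · exact h
  obtain ⟨X, hX1, hX2, hX3⟩ := main_bound (cycleZMod m □ cycleZMod m) ht hk c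
    (fun v => by
      refine Eq.trans
        (degree_instance_irrel _ v _ (SimpleGraph.boxProdFintypeNeighborSet v)) ?_
      rw [SimpleGraph.degree_boxProd, cycle_degree m hm, cycle_degree m hm]) hsize heq
  have h1 : ((∑ v, Usharp (cycleZMod m □ cycleZMod m) c v : ℕ) : ℤ) + (X : ℤ)
      = 4 * ((t : ℤ) * (k : ℤ)) := by exact_mod_cast hX1
  have h2 : (X : ℤ) ≤ ((t : ℤ) + 3) * (k : ℤ) := by exact_mod_cast hX2
  have h3 : (X : ℤ) ≤ 10 * (k : ℤ) := by exact_mod_cast hX3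
  have hk' : (1 : ℤ) ≤ (k : ℤ) := by exact_mod_cast hk
  constructor <;> nlinarith [h1, h2, h3, hk']
end
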